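/- Let r, κ₁, κ₂, κ₃ be positive integers and let N₁, N₂, N₃ and N₁', N₂', N₃' be real matrices with Nᵢ and Nᵢ' of size r × κᵢ. Let jᵢ denote the Kruskal rank of Nᵢ. If j₁ + j₂ + j₃ ≥ 2r + 2 and [N₁,N₂,N₃] = [N₁',N₂',N₃'], then there exist an r × r permutation matrix P and r × r diagonal matrices D₁, D₂, D₃ with D₁D₂D₃ = I such that Nᵢ' = P Dᵢ Nᵢ for i = 1,2,3. -/

import Mathlib

/-- The Kruskal rank of a real matrix: the largest `j` such that every set of `j`
rows is linearly independent. -/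
noncomputable def kruskalRank {r κ : ℕ} (N : Matrix (Fin r) (Fin κ) ℝ) : ℕ :=
  sSup {j | j ≤ r ∧ ∀ s : Finset (Fin r), s.card = j →
    LinearIndependent ℝ (fun i : s => N (i : Fin r))}

/-- The triple product `[N₁, N₂, N₃]`. -/
def tripleProd {r κ₁ κ₂ κ₃ : ℕ} (N₁ : Matrix (Fin r) (Fin κ₁) ℝ)
    (N₂ : Matrix (Fin r) (Fin κ₂) ℝ) (N₃ : Matrix (Fin r) (Fin κ₃) ℝ) :
    Fin κ₁ → Fin κ₂ → Fin κ₃ → ℝ :=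
  fun k₁ k₂ k₃ => ∑ j, N₁ j k₁ * N₂ j k₂ * N₃ j k₃

/-- The permutation matrix of a permutation `σ`. -/
def permMatrix {n : ℕ} (σ : Equiv.Perm (Fin n)) : Matrix (Fin n) (Fin n) ℝ :=
  Matrix.of fun i j => if σ i = j then 1 else 0

open Finset Submodule Module

local notation "⟪" x ", " y "⟫" => (inner ℝ x y : ℝ)

section Helpers

variable {E : Type*} [NormedAddCommGroup E] [InnerProductSpace ℝ E] [FiniteDimensional ℝ E]

/-- Generic vector in the orthogonal complement of `W` avoiding finitely many hyperplanes. -/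
lemma exists_forall_inner_ne {ι : Type*} [Fintype ι] (W : Submodule ℝ E) (v : ι → E) :
    ∃ x ∈ Wᗮ, ∀ i, v i ∉ W → ⟪v i, x⟫ ≠ 0 := by
  classical
  suffices h : ∀ s : Finset ι, ∃ x ∈ Wᗮ, ∀ i ∈ s, v i ∉ W → ⟪v i, x⟫ ≠ 0 by
    obtain ⟨x, hx1, hx2⟩ := h Finset.univ
    exact ⟨x, hx1, fun i hi => hx2 i (Finset.mem_univ i) hi⟩
  intro s
  induction s using Finset.induction_on with
  | empty => exact ⟨0, zero_mem _, fun i hi => absurd hi (Finset.notMem_empty i)⟩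
  | insert _ _ ha =>
    rename_i a s ih
    obtain ⟨x, hxW, hx⟩ := ih
    by_cases hva : v a ∈ W
    · exact ⟨x, hxW, fun i hi hvi => by
        rcases Finset.mem_insert.mp hi with rfl | hi
        · exact absurd hva hvi
        · exact hx i hi hvi⟩
    · have hy : ∃ y ∈ Wᗮ, ⟪v a, y⟫ ≠ 0 := by
        by_contra hcon
        push_neg at hcon
        apply hva
        have hmem : v a ∈ Wᗮᗮ := by
          rw [Submodule.mem_orthogonal]
          intro u hu
          rw [real_inner_comm]
          exact hcon u hu
        rwa [Submodule.orthogonal_orthogonal] at hmem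
      obtain ⟨y, hyW, hvy⟩ := hy
      set bad : Finset ℝ :=
        (insert a s).image (fun i => -⟪v i, x⟫ / ⟪v i, y⟫) with hbad
      obtain ⟨t, ht⟩ := Infinite.exists_notMem_finset bad
      refine ⟨x + t • y, Submodule.add_mem _ hxW (Submodule.smul_mem _ _ hyW), ?_⟩
      intro i hi hvi
      have hins : ⟪v i, x + t • y⟫ = ⟪v i, x⟫ + t * ⟪v i, y⟫ := by
        rw [inner_add_right, real_inner_smul_right]
      rw [hins]
      by_cases hiy : ⟪v i, y⟫ = 0
      · rcases Finset.mem_insert.mp hi with rfl | hi'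
        · exact absurd hiy hvy
        · simpa [hiy] using hx i hi' hvi
      · intro hzero
        apply ht
        rw [hbad]
        refine Finset.mem_image.mpr ⟨i, hi, ?_⟩
        field_simp
        linarith [hzero]

/-- Kruskal-rank-style bound as an abstract property. -/
def KB {r : ℕ} (u : Fin r → E) (k : ℕ) : Prop :=
  ∀ S : Finset (Fin r), S.card ≤ k → LinearIndependent ℝ (fun i : S => u (i : Fin r))

variable {r : ℕ}

omit [FiniteDimensional ℝ E] in
lemma KB.mono {u : Fin r → E} {k k' : ℕ} (h : KB u k) (hk : k' ≤ k) : KB u k' :=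
  fun S hS => h S (hS.trans hk)

omit [FiniteDimensional ℝ E] in
lemma KB.finrank_span {u : Fin r → E} {k : ℕ} (h : KB u k) {S : Finset (Fin r)}
    (hS : S.card ≤ k) : finrank ℝ (span ℝ (u '' S)) = S.card := by
  classical
  have hli := h S hS
  have hcard := (linearIndependent_iff_card_eq_finrank_span).mp hli
  rw [Fintype.card_coe] at hcard
  have hrange : Set.range (fun i : S => u (i : Fin r)) = u '' (S : Set (Fin r)) := by
    ext x; simp
  rw [Set.finrank, hrange] at hcard
  omega

omit [FiniteDimensional ℝ E] in
lemma KB.nonzero {u : Fin r → E} {k : ℕ} (h : KB u k) (hk : 1 ≤ k) (j : Fin r) : u j ≠ 0 := by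
  classical
  have hli := h {j} (by simp [hk])
  have := hli.ne_zero ⟨j, Finset.mem_singleton_self j⟩
  simpa using this

open scoped Classical in
/-- At most `finrank W` of the `u j` can lie in a submodule `W`, if `finrank W < k`. -/
lemma KB.card_filter_mem_le {u : Fin r → E} {k : ℕ} (h : KB u k) (W : Submodule ℝ E)
    (hW : finrank ℝ W + 1 ≤ k) :
    (Finset.univ.filter (fun j => u j ∈ W)).card ≤ finrank ℝ W := by
  by_contra hcon
  push_neg at hcon
  obtain ⟨T, hTsub, hTcard⟩ := Finset.exists_subset_card_eq hcon
  have hspan : span ℝ (u '' (T : Set (Fin r))) ≤ W := by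
    rw [Submodule.span_le]
    rintro x ⟨j, hj, rfl⟩
    have hmem := hTsub hj
    simpa using (Finset.mem_filter.mp hmem).2
  have h1 : finrank ℝ (span ℝ (u '' (T : Set (Fin r)))) = finrank ℝ W + 1 := by
    rw [h.finrank_span (by omega), hTcard]
  have h2 : finrank ℝ (span ℝ (u '' (T : Set (Fin r)))) ≤ finrank ℝ W :=
    Submodule.finrank_mono hspan
  omega

omit [FiniteDimensional ℝ E] in
lemma KB.not_mem_span {u : Fin r → E} {k : ℕ} (h : KB u k) {S : Finset (Fin r)} {j : Fin r}
    (hS : S.card + 1 ≤ k) (hj : j ∉ S) : u j ∉ span ℝ (u '' (S : Set (Fin r))) := by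
  classical
  intro hmem
  have hins : span ℝ (u '' ((insert j S : Finset (Fin r)) : Set (Fin r)))
      = span ℝ (u '' (S : Set (Fin r))) := by
    rw [Finset.coe_insert]
    apply le_antisymm
    · rw [Submodule.span_le]
      rintro x ⟨i, hi, rfl⟩
      rcases Set.mem_insert_iff.mp hi with rfl | hiS
      · exact hmem
      · exact Submodule.subset_span ⟨i, hiS, rfl⟩
    · exact Submodule.span_mono (Set.image_mono (Set.subset_insert _ _))
  have h1 : finrank ℝ (span ℝ (u '' ((insert j S : Finset (Fin r)) : Set (Fin r)))) = S.card + 1 := by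
    rw [h.finrank_span (by rw [Finset.card_insert_of_notMem hj]; omega),
      Finset.card_insert_of_notMem hj]
  have h2 : finrank ℝ (span ℝ (u '' (S : Set (Fin r)))) = S.card := h.finrank_span (by omega)
  rw [hins, h2] at h1
  omega

omit [FiniteDimensional ℝ E] in
lemma KB.combo_zero {u : Fin r → E} {k : ℕ} (h : KB u k) {S : Finset (Fin r)}
    (hS : S.card ≤ k) {f : Fin r → ℝ} (hsum : ∑ j ∈ S, f j • u j = 0) :
    ∀ j ∈ S, f j = 0 := by
  classical
  have hli := h S hS
  rw [Fintype.linearIndependent_iff] at hli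
  intro j hj
  have hsum' : ∑ i : S, f (i : Fin r) • u (i : Fin r) = 0 := by
    rwa [← Finset.sum_coe_sort S (fun j => f j • u j)] at hsum
  exact hli (fun i => f i) hsum' ⟨j, hj⟩

end Helpers

section B2
variable {E : Type*} [NormedAddCommGroup E] [InnerProductSpace ℝ E] {r : ℕ}


/-- For a family linearly independent on `S ∪ T`, spans intersect in the span of the
intersection. -/
lemma span_inter {u : Fin r → E} {S T : Finset (Fin r)}
    (hli : LinearIndependent ℝ (fun i : (S ∪ T : Finset (Fin r)) => u (i : Fin r))) :
    span ℝ (u '' (S : Set (Fin r))) ⊓ span ℝ (u '' (T : Set (Fin r)))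
      = span ℝ (u '' ((S ∩ T : Finset (Fin r)) : Set (Fin r))) := by
  classical
  apply le_antisymm
  · intro x hx
    rw [Submodule.mem_inf] at hx
    obtain ⟨hxS, hxT⟩ := hx
    have hSfin : S = (S ∩ T) ∪ (S \ T) := by
      ext i; simp only [Finset.mem_union, Finset.mem_inter, Finset.mem_sdiff]; tauto
    have hS : (S : Set (Fin r)) = ((S ∩ T : Finset (Fin r)) : Set (Fin r)) ∪ ((S \ T : Finset (Fin r)) : Set (Fin r)) := by
      rw [← Finset.coe_union, ← hSfin]
    rw [hS, Set.image_union, Submodule.span_union, Submodule.mem_sup] at hxS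
    obtain ⟨y, hy, z, hz, hyz⟩ := hxS
    have hzeq : z = x - y := by rw [← hyz]; abel
    have hzT' : z ∈ span ℝ (u '' (T : Set (Fin r))) := by
      rw [hzeq]
      apply Submodule.sub_mem _ hxT
      have hsub : span ℝ (u '' ((S ∩ T : Finset (Fin r)) : Set (Fin r)))
          ≤ span ℝ (u '' (T : Set (Fin r))) := by
        apply Submodule.span_mono; apply Set.image_mono
        intro i hi; simp at hi ⊢; exact hi.2
      exact hsub hy
    have hdisj : Disjoint (span ℝ (u '' ((S \ T : Finset (Fin r)) : Set (Fin r))))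
        (span ℝ (u '' (T : Set (Fin r)))) := by
      set U := (S ∪ T : Finset (Fin r)) with hU
      have h1 : (u '' ((S \ T : Finset (Fin r)) : Set (Fin r)))
          = (fun i : U => u (i : Fin r)) '' {i : U | (i : Fin r) ∈ S \ T} := by
        ext e
        constructor
        · rintro ⟨i, hi, rfl⟩
          have hiU : i ∈ U := by
            rw [hU, Finset.mem_union]; left
            simp only [Finset.coe_sdiff, Set.mem_diff, Finset.mem_coe] at hi
            exact hi.1
          exact ⟨⟨i, hiU⟩, by simpa using hi, rfl⟩
        · rintro ⟨⟨i, hiU⟩, hmem, rfl⟩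
          exact ⟨i, by simpa using hmem, rfl⟩
      have h2 : (u '' (T : Set (Fin r)))
          = (fun i : U => u (i : Fin r)) '' {i : U | (i : Fin r) ∈ T} := by
        ext e
        constructor
        · rintro ⟨i, hi, rfl⟩
          have hiU : i ∈ U := by
            rw [hU, Finset.mem_union]; right; simpa using hi
          exact ⟨⟨i, hiU⟩, by simpa using hi, rfl⟩
        · rintro ⟨⟨i, hiU⟩, hmem, rfl⟩
          exact ⟨i, by simpa using hmem, rfl⟩
      have hd : Disjoint {i : U | (i : Fin r) ∈ S \ T} {i : U | (i : Fin r) ∈ T} := by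
        rw [Set.disjoint_iff]
        rintro ⟨i, hi⟩ ⟨h1', h2'⟩
        simp only [Set.mem_setOf_eq, Finset.mem_sdiff] at h1' h2'
        exact absurd h2' h1'.2
      rw [h1, h2]
      exact hli.disjoint_span_image hd
    have hz0 : z = 0 := by
      have := hdisj.le_bot (Submodule.mem_inf.mpr ⟨hz, hzT'⟩)
      simpa using this
    rw [← hyz, hz0, add_zero]
    exact hy
  · apply le_inf
    · apply Submodule.span_mono; apply Set.image_mono
      intro i hi; simp at hi ⊢; exact hi.1
    · apply Submodule.span_mono; apply Set.image_mono
      intro i hi; simp at hi ⊢; exact hi.2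

/-- Sylvester rank inequality. -/
lemma sylvester {M N P : Type*} [AddCommGroup M] [Module ℝ M] [AddCommGroup N] [Module ℝ N]
    [AddCommGroup P] [Module ℝ P] [FiniteDimensional ℝ N]
    (f : M →ₗ[ℝ] N) (g : N →ₗ[ℝ] P) :
    finrank ℝ (LinearMap.range g) + finrank ℝ (LinearMap.range f)
      ≤ finrank ℝ (LinearMap.range (g.comp f)) + finrank ℝ N := by
  classical
  set g' := g.domRestrict (LinearMap.range f) with hg'
  have hrange : LinearMap.range g' = LinearMap.range (g.comp f) := by
    rw [hg', LinearMap.range_domRestrict, LinearMap.range_comp]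
  have hrn := LinearMap.finrank_range_add_finrank_ker g'
  have hkerle : finrank ℝ (LinearMap.ker g') ≤ finrank ℝ (LinearMap.ker g) := by
    have hle : Submodule.map (LinearMap.range f).subtype (LinearMap.ker g') ≤ LinearMap.ker g := by
      rintro x ⟨⟨y, hy⟩, hmem, rfl⟩
      simpa [hg'] using hmem
    calc finrank ℝ (LinearMap.ker g')
        = finrank ℝ (Submodule.map (LinearMap.range f).subtype (LinearMap.ker g')) := by
          rw [Submodule.finrank_map_subtype_eq]
      _ ≤ finrank ℝ (LinearMap.ker g) := Submodule.finrank_mono hle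
  have hrng := LinearMap.finrank_range_add_finrank_ker g
  have hrnf : finrank ℝ (LinearMap.range f) = finrank ℝ (LinearMap.range f) := rfl
  -- relate finrank of range f as submodule of N
  have hfr := LinearMap.finrank_range_add_finrank_ker g'
  rw [hrange] at hrn
  -- finrank of domain of g' is finrank (range f)
  omega
end B2


section Phi
variable {E₁ E₂ : Type*} [NormedAddCommGroup E₁] [InnerProductSpace ℝ E₁]
  [NormedAddCommGroup E₂] [InnerProductSpace ℝ E₂]
  [FiniteDimensional ℝ E₁] [FiniteDimensional ℝ E₂] {r : ℕ}


/-- The slice linear map `y ↦ ∑ j, d j * ⟪b j, y⟫ • a j`. -/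
noncomputable def Phi (a : Fin r → E₁) (b : Fin r → E₂) (d : Fin r → ℝ) : E₂ →ₗ[ℝ] E₁ :=
  ∑ j : Fin r, ((d j) • ((innerSL ℝ (b j)).toLinearMap)).smulRight (a j)

lemma Phi_apply (a : Fin r → E₁) (b : Fin r → E₂) (d : Fin r → ℝ) (y : E₂) :
    Phi a b d y = ∑ j : Fin r, (d j * ⟪b j, y⟫) • a j := by
  simp [Phi, LinearMap.sum_apply, LinearMap.smulRight_apply]

lemma mem_orthogonal_span_iff {E : Type*} [NormedAddCommGroup E] [InnerProductSpace ℝ E]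
    (s : Set E) (y : E) :
    y ∈ (span ℝ s)ᗮ ↔ ∀ v ∈ s, ⟪v, y⟫ = 0 := by
  constructor
  · intro hy v hv
    exact hy v (Submodule.subset_span hv)
  · intro h
    rw [Submodule.mem_orthogonal]
    intro u hu
    induction hu using Submodule.span_induction with
    | mem x hx => exact h x hx
    | zero => simp
    | add x y' hx hy' ihx ihy => rw [inner_add_left, ihx, ihy]; ring
    | smul c x hx ih => rw [real_inner_smul_left, ih]; ring

open scoped Classical in
lemma rank_Phi_le (a : Fin r → E₁) (b : Fin r → E₂) (d : Fin r → ℝ) :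
    finrank ℝ (LinearMap.range (Phi a b d)) ≤ (univ.filter (fun j => d j ≠ 0)).card := by
  set supp := univ.filter (fun j => d j ≠ 0) with hsupp
  have hrange : LinearMap.range (Phi a b d) ≤ span ℝ (a '' (supp : Set (Fin r))) := by
    rintro x ⟨y, rfl⟩
    rw [Phi_apply]
    rw [← Finset.sum_filter_of_ne (p := fun j => d j ≠ 0) (s := univ)
      (f := fun j => (d j * ⟪b j, y⟫) • a j)]
    · apply Submodule.sum_mem
      intro j hj
      exact Submodule.smul_mem _ _ (Submodule.subset_span ⟨j, by simpa [hsupp] using hj, rfl⟩)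
    · intro j _ hne hdj
      exfalso; apply hne; rw [hdj]; simp
  calc finrank ℝ (LinearMap.range (Phi a b d)) ≤ finrank ℝ (span ℝ (a '' (supp : Set (Fin r)))) :=
        Submodule.finrank_mono hrange
    _ ≤ supp.card := by
        have h1 : a '' (supp : Set (Fin r)) = ((supp.image a : Finset E₁) : Set E₁) := by
          simp [Finset.coe_image]
        rw [h1]
        calc finrank ℝ (span ℝ ((supp.image a : Finset E₁) : Set E₁)) ≤ (supp.image a).card :=
              finrank_span_finset_le_card _
          _ ≤ supp.card := Finset.card_image_le

open scoped Classical in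
lemma rank_Phi_ge {a : Fin r → E₁} {b : Fin r → E₂} {ka kb : ℕ}
    (hka : KB a ka) (hkb : KB b kb) (d : Fin r → ℝ) :
    min ka ((univ.filter (fun j => d j ≠ 0)).card) + min kb ((univ.filter (fun j => d j ≠ 0)).card)
      ≤ finrank ℝ (LinearMap.range (Phi a b d)) + (univ.filter (fun j => d j ≠ 0)).card := by
  set supp := univ.filter (fun j => d j ≠ 0) with hsupp
  set ω := supp.card with hω
  -- middle space
  set Mid := ({x // x ∈ supp} → ℝ)
  have hMid : finrank ℝ Mid = ω := by
    rw [Module.finrank_pi]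
    simp [hω, Fintype.card_coe]
  -- the two factor maps
  set f₂ : E₂ →ₗ[ℝ] Mid := LinearMap.pi
    (fun j : {x // x ∈ supp} => (d (j : Fin r)) • ((innerSL ℝ (b (j : Fin r))).toLinearMap)) with hf₂
  set f₁ : Mid →ₗ[ℝ] E₁ := ∑ j : {x // x ∈ supp}, (LinearMap.proj j).smulRight (a (j : Fin r)) with hf₁
  have hcomp : Phi a b d = f₁.comp f₂ := by
    ext y
    rw [LinearMap.comp_apply, Phi_apply, hf₁]
    rw [LinearMap.sum_apply]
    simp only [LinearMap.smulRight_apply, LinearMap.proj_apply, hf₂, LinearMap.pi_apply,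
      LinearMap.smul_apply, ContinuousLinearMap.coe_coe, innerSL_apply_apply, smul_eq_mul]
    rw [← Finset.sum_filter_of_ne (p := fun j => d j ≠ 0) (s := univ)
      (f := fun j => (d j * ⟪b j, y⟫) • a j)]
    · rw [← Finset.sum_attach supp (fun j => (d j * ⟪b j, y⟫) • a j)]
      apply Finset.sum_congr rfl
      intro j _
      rfl
    · intro j _ hne hdj
      exfalso; apply hne; rw [hdj]; simp
  -- rank of f₁
  have hω_le : ω ≤ supp.card := le_of_eq hω
  have hrank1 : min ka ω ≤ finrank ℝ (LinearMap.range f₁) := by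
    obtain ⟨T, hTsub, hTcard⟩ := Finset.exists_subset_card_eq
      (show min ka ω ≤ supp.card by omega)
    have hspan : span ℝ (a '' (T : Set (Fin r))) ≤ LinearMap.range f₁ := by
      rw [Submodule.span_le]
      rintro x ⟨j, hj, rfl⟩
      have hjsupp : j ∈ supp := hTsub (by simpa using hj)
      refine ⟨Pi.single (⟨j, hjsupp⟩ : {x // x ∈ supp}) (1:ℝ), ?_⟩
      rw [hf₁, LinearMap.sum_apply]
      have hterm : ∀ i : {x // x ∈ supp},
          ((LinearMap.proj (R := ℝ) (φ := fun _ : {x // x ∈ supp} => ℝ) i).smulRight (a (i : Fin r)))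
              (Pi.single (⟨j, hjsupp⟩ : {x // x ∈ supp}) (1:ℝ))
            = if i = ⟨j, hjsupp⟩ then a j else 0 := by
        intro i
        by_cases h : i = (⟨j, hjsupp⟩ : {x // x ∈ supp})
        · subst h; simp [LinearMap.smulRight_apply, Pi.single_eq_same]
        · simp [LinearMap.smulRight_apply, Pi.single_eq_of_ne h, h]
      rw [Finset.sum_congr rfl (fun i _ => hterm i)]
      simp
    calc min ka ω = finrank ℝ (span ℝ (a '' (T : Set (Fin r)))) := by
          rw [hka.finrank_span (by rw [hTcard]; exact min_le_left _ _), hTcard]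
      _ ≤ finrank ℝ (LinearMap.range f₁) := Submodule.finrank_mono hspan
  -- rank of f₂
  have hrank2 : min kb ω ≤ finrank ℝ (LinearMap.range f₂) := by
    obtain ⟨T, hTsub, hTcard⟩ := Finset.exists_subset_card_eq
      (show min kb ω ≤ supp.card by omega)
    -- project to coordinates in T
    set π : Mid →ₗ[ℝ] ({x // x ∈ T} → ℝ) :=
      LinearMap.funLeft ℝ ℝ (fun i : {x // x ∈ T} => (⟨(i : Fin r), hTsub i.2⟩ : {x // x ∈ supp}))
      with hπ
    set G := π.comp f₂ with hG
    have hGker : LinearMap.ker G = (span ℝ (b '' (T : Set (Fin r))))ᗮ := by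
      ext y
      rw [LinearMap.mem_ker, mem_orthogonal_span_iff]
      constructor
      · intro h0 v hv
        obtain ⟨j, hj, rfl⟩ := hv
        have hj' : j ∈ T := by simpa using hj
        have := congrFun h0 ⟨j, hj'⟩
        simp only [hG, hπ, LinearMap.comp_apply, LinearMap.funLeft_apply, hf₂,
          LinearMap.pi_apply, LinearMap.smul_apply, ContinuousLinearMap.coe_coe,
          innerSL_apply_apply, smul_eq_mul, Pi.zero_apply] at this
        have hdj : d j ≠ 0 := by
          have := hTsub hj'
          simpa [hsupp] using this
        exact (mul_eq_zero.mp this).resolve_left hdj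
      · intro h
        funext i
        simp only [hG, hπ, LinearMap.comp_apply, LinearMap.funLeft_apply, hf₂,
          LinearMap.pi_apply, LinearMap.smul_apply, ContinuousLinearMap.coe_coe,
          innerSL_apply_apply, smul_eq_mul, Pi.zero_apply]
        have h0 : ⟪b (i : Fin r), y⟫ = 0 := h _ ⟨(i : Fin r), by simp, rfl⟩
        show d (i : Fin r) * ⟪b (i : Fin r), y⟫ = 0
        rw [h0]
        ring
    have hrnG := LinearMap.finrank_range_add_finrank_ker G
    have horth := Submodule.finrank_add_finrank_orthogonal (span ℝ (b '' (T : Set (Fin r))))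
    have hWT : finrank ℝ (span ℝ (b '' (T : Set (Fin r)))) = min kb ω := by
      rw [hkb.finrank_span (by rw [hTcard]; exact min_le_left _ _), hTcard]
    have hrangeG : finrank ℝ (LinearMap.range G) ≤ finrank ℝ (LinearMap.range f₂) := by
      rw [hG, LinearMap.range_comp]
      exact Submodule.finrank_map_le _ _
    rw [hGker] at hrnG
    omega
  have hsyl := sylvester f₂ f₁
  rw [← hcomp] at hsyl
  rw [hMid] at hsyl
  omega
end Phi

section Slice
open Finset Submodule Module
variable {r : ℕ} {E₁ E₂ E₃ : Type*} [NormedAddCommGroup E₁] [InnerProductSpace ℝ E₁]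
  [NormedAddCommGroup E₂] [InnerProductSpace ℝ E₂] [NormedAddCommGroup E₃]
  [InnerProductSpace ℝ E₃] [FiniteDimensional ℝ E₁] [FiniteDimensional ℝ E₂]
  [FiniteDimensional ℝ E₃]

open scoped Classical in
noncomputable def nzc (c : Fin r → E₃) (z : E₃) : ℕ :=
  (Finset.univ.filter (fun j => ⟪c j, z⟫ ≠ 0)).card

open scoped Classical in
lemma omega_ineq {a a' : Fin r → E₁} {b b' : Fin r → E₂} {c c' : Fin r → E₃}
    {ka kb : ℕ} (hka : KB a ka) (hkb : KB b kb)
    (hyp : ∀ (y : E₂) (z : E₃),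
      ∑ j : Fin r, (⟪c j, z⟫ * ⟪b j, y⟫) • a j = ∑ j : Fin r, (⟪c' j, z⟫ * ⟪b' j, y⟫) • a' j)
    (z : E₃) :
    min ka (nzc c z) + min kb (nzc c z) ≤ nzc c' z + nzc c z := by
  have hPhi : Phi a b (fun j => ⟪c j, z⟫) = Phi a' b' (fun j => ⟪c' j, z⟫) := by
    ext y; rw [Phi_apply, Phi_apply]; exact hyp y z
  have h1 := rank_Phi_ge hka hkb (fun j => ⟪c j, z⟫)
  have h2 := rank_Phi_le a' b' (fun j => ⟪c' j, z⟫)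
  rw [hPhi] at h1
  unfold nzc
  omega

open scoped Classical in
lemma li_of_subset {E : Type*} [NormedAddCommGroup E] [InnerProductSpace ℝ E]
    {u : Fin r → E} {S T : Finset (Fin r)} (hST : S ⊆ T)
    (h : LinearIndependent ℝ (fun i : T => u (i : Fin r))) :
    LinearIndependent ℝ (fun i : S => u (i : Fin r)) := by
  have hcomp := h.comp (fun i : S => (⟨(i : Fin r), hST i.2⟩ : T))
    (fun i j hij => by
      apply Subtype.ext
      simpa using congrArg Subtype.val hij)
  exact hcomp

lemma finrank_span_image_le {E : Type*} [NormedAddCommGroup E] [InnerProductSpace ℝ E]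
    (u : Fin r → E) (S : Finset (Fin r)) :
    finrank ℝ (span ℝ (u '' (S : Set (Fin r)))) ≤ S.card := by
  classical
  have h1 : u '' (S : Set (Fin r)) = ((S.image u : Finset E) : Set E) := by
    simp [Finset.coe_image]
  rw [h1]
  calc finrank ℝ (span ℝ ((S.image u : Finset E) : Set E)) ≤ (S.image u).card :=
        finrank_span_finset_le_card _
    _ ≤ S.card := Finset.card_image_le

open scoped Classical in
/-- Linear independence (up to level `kc`) passes to the primed family. -/
lemma kb_primed {c c' : Fin r → E₃} {ka kb kc s : ℕ} (hkc : KB c kc)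
    (R1 : ∀ z, min ka (nzc c z) + min kb (nzc c z) ≤ nzc c' z + nzc c z)
    (hsum : ka + kb + s = 2 * r + 1) (hka_r : ka ≤ r) (hkb_r : kb ≤ r)
    (hskc : s + 1 ≤ kc) (hkc_r : kc ≤ r) :
    KB c' kc := by
  intro S hScard
  -- extend S to a set of cardinality `max S.card s`
  obtain ⟨S'', hsub, hcard⟩ := Finset.exists_superset_card_eq
    (le_max_left S.card s) (by rw [Fintype.card_fin]; omega)
  apply li_of_subset hsub
  have hm1 : s ≤ S''.card := by rw [hcard]; exact le_max_right _ _
  have hm2 : S''.card ≤ kc := by rw [hcard]; omega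
  set W := span ℝ (c' '' (S'' : Set (Fin r))) with hW
  obtain ⟨x, hxW, hxgen⟩ := exists_forall_inner_ne W c
  -- primed zero count
  have hω' : nzc c' x + S''.card ≤ r := by
    have hsub2 : Finset.univ.filter (fun i => ⟪c' i, x⟫ ≠ 0) ⊆ Finset.univ \ S'' := by
      intro i hi
      rw [Finset.mem_filter] at hi
      rw [Finset.mem_sdiff]
      refine ⟨Finset.mem_univ _, fun hiS => hi.2 ?_⟩
      exact hxW (c' i) (Submodule.subset_span ⟨i, hiS, rfl⟩)
    have := Finset.card_le_card hsub2
    rw [Finset.card_sdiff_of_subset (Finset.subset_univ _), Finset.card_univ, Fintype.card_fin] at this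
    unfold nzc
    omega
  -- count of c's in W
  have hiff : ∀ j, ⟪c j, x⟫ = 0 ↔ c j ∈ W := by
    intro j
    constructor
    · intro h0
      by_contra hmem
      exact hxgen j hmem h0
    · intro hmem
      exact hxW (c j) hmem
  have hcount : (Finset.univ.filter (fun j => c j ∈ W)).card + nzc c x = r := by
    unfold nzc
    have hfe : Finset.univ.filter (fun j => c j ∈ W)
        = Finset.univ.filter (fun j => ¬ (⟪c j, x⟫ ≠ 0)) := by
      apply Finset.filter_congr
      intro j _
      simp only [not_not]
      exact (hiff j).symm
    rw [hfe]
    rw [add_comm]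
    rw [Finset.card_filter_add_card_filter_not]
    · rw [Finset.card_univ, Fintype.card_fin]
  have hp : S''.card ≤ (Finset.univ.filter (fun j => c j ∈ W)).card := by
    have hR := R1 x
    omega
  obtain ⟨T, hTsub, hTcard⟩ := Finset.exists_subset_card_eq hp
  have hfrT : finrank ℝ (span ℝ (c '' (T : Set (Fin r)))) = S''.card := by
    rw [hkc.finrank_span (by omega), hTcard]
  have hspanT : span ℝ (c '' (T : Set (Fin r))) ≤ W := by
    rw [Submodule.span_le]
    rintro v ⟨j, hj, rfl⟩
    have := hTsub (by simpa using hj)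
    simpa using (Finset.mem_filter.mp this).2
  have hfrW_ge : S''.card ≤ finrank ℝ W := by
    rw [← hfrT]; exact Submodule.finrank_mono hspanT
  have hfrW_le : finrank ℝ W ≤ S''.card := finrank_span_image_le c' S''
  rw [linearIndependent_iff_card_eq_finrank_span]
  have hrange : Set.range (fun i : S'' => c' (i : Fin r)) = c' '' (S'' : Set (Fin r)) := by
    ext v; simp
  rw [Fintype.card_coe, Set.finrank, hrange, ← hW]
  omega
end Slice
section Matching
open Finset Submodule Module
variable {r : ℕ} {E₃ : Type*} [NormedAddCommGroup E₃] [InnerProductSpace ℝ E₃]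
  [FiniteDimensional ℝ E₃]

open scoped Classical in
lemma matching {c c' : Fin r → E₃} {ka kb kc s : ℕ} (hkc : KB c kc) (hkc' : KB c' kc)
    (R2 : ∀ z, min ka (nzc c' z) + min kb (nzc c' z) ≤ nzc c z + nzc c' z)
    (hsum : ka + kb + s = 2 * r + 1) (hka_r : ka ≤ r) (hkb_r : kb ≤ r)
    (hskc : s + 1 ≤ kc) (hkc_r : kc ≤ r) (hkc2 : 2 ≤ kc) :
    ∃ (τ : Equiv.Perm (Fin r)) (γ : Fin r → ℝ), (∀ i, γ i ≠ 0) ∧ ∀ i, c' i = γ i • c (τ i) := by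
  have hs1 : 1 ≤ s := by omega
  set I : Finset (Fin r) → Finset (Fin r) :=
    fun S => Finset.univ.filter (fun i => c' i ∈ span ℝ (c '' (S : Set (Fin r)))) with hI
  -- upper bound on |I S|
  have hupper : ∀ S : Finset (Fin r), S.card + 1 ≤ kc → (I S).card ≤ S.card := by
    intro S hS
    have hfr : finrank ℝ (span ℝ (c '' (S : Set (Fin r)))) ≤ S.card := finrank_span_image_le c S
    have hle := hkc'.card_filter_mem_le (span ℝ (c '' (S : Set (Fin r)))) (by omega)
    calc (I S).card ≤ finrank ℝ (span ℝ (c '' (S : Set (Fin r)))) := hle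
      _ ≤ S.card := hfr
  -- base case: |I S| = |S| for s ≤ |S| ≤ kc - 1
  have hbase : ∀ S : Finset (Fin r), s ≤ S.card → S.card + 1 ≤ kc → (I S).card = S.card := by
    intro S hsS hkcS
    have hup := hupper S hkcS
    set W := span ℝ (c '' (S : Set (Fin r))) with hW
    obtain ⟨x, hxW, hxgen⟩ := exists_forall_inner_ne W c'
    have hω : nzc c x + S.card ≤ r := by
      have hsub2 : Finset.univ.filter (fun j => (inner ℝ (c j) x : ℝ) ≠ 0) ⊆ Finset.univ \ S := by
        intro j hj
        rw [Finset.mem_filter] at hj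
        rw [Finset.mem_sdiff]
        refine ⟨Finset.mem_univ _, fun hjS => hj.2 ?_⟩
        exact hxW (c j) (Submodule.subset_span ⟨j, hjS, rfl⟩)
      have hcc := Finset.card_le_card hsub2
      rw [Finset.card_sdiff_of_subset (Finset.subset_univ _), Finset.card_univ, Fintype.card_fin] at hcc
      unfold nzc
      omega
    have hcount : (I S).card + nzc c' x = r := by
      unfold nzc
      have hfe : I S = Finset.univ.filter (fun i => ¬ ((inner ℝ (c' i) x : ℝ) ≠ 0)) := by
        rw [hI]
        apply Finset.filter_congr
        intro i _
        simp only [not_not]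
        constructor
        · intro hmem; exact hxW (c' i) hmem
        · intro h0; by_contra hmem; exact hxgen i hmem h0
      rw [hfe, add_comm, Finset.card_filter_add_card_filter_not, Finset.card_univ,
        Fintype.card_fin]
    have hR := R2 x
    omega
  -- descent step
  have hstep : ∀ m : ℕ, 1 ≤ m → m + 1 ≤ s →
      (∀ S : Finset (Fin r), S.card = m + 1 → (I S).card = m + 1) →
      (∀ S : Finset (Fin r), S.card = m → (I S).card = m) := by
    intro m hm1 hms IH T hT
    have hupT : (I T).card ≤ m := by rw [← hT]; exact hupper T (by omega)
    by_contra hne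
    have hlt : (I T).card + 1 ≤ m := by omega
    set i0 := (I T).card with hi0
    set A := Finset.univ \ T with hA
    have hAcard : A.card = r - m := by
      rw [hA, Finset.card_sdiff_of_subset (Finset.subset_univ _), Finset.card_univ, Fintype.card_fin, hT]
    have hmr : m + 2 ≤ r := by omega
    have hnotT : ∀ α ∈ A, α ∉ T := by
      intro α hα; rw [hA, Finset.mem_sdiff] at hα; exact hα.2
    have hSα : ∀ α ∈ A, (insert α T).card = m + 1 := by
      intro α hα
      rw [Finset.card_insert_of_notMem (hnotT α hα), hT]
    have hIsub : ∀ α ∈ A, I T ⊆ I (insert α T) := by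
      intro α hα i hi
      rw [hI, Finset.mem_filter] at hi ⊢
      refine ⟨hi.1, ?_⟩
      apply Submodule.span_mono (Set.image_mono ?_) hi.2
      rw [Finset.coe_insert]
      exact Set.subset_insert _ _
    have hpair : ∀ α ∈ A, ∀ β ∈ A, α ≠ β → I (insert α T) ∩ I (insert β T) = I T := by
      intro α hα β hβ hab
      have hU : (insert α T) ∪ (insert β T) = insert α (insert β T) := by
        ext i
        simp only [Finset.mem_union, Finset.mem_insert]
        tauto
      have hUcard : ((insert α T) ∪ (insert β T)).card = m + 2 := by
        rw [hU, Finset.card_insert_of_notMem, Finset.card_insert_of_notMem (hnotT β hβ), hT]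
        simp only [Finset.mem_insert]
        push_neg
        exact ⟨hab, hnotT α hα⟩
      have hliU : LinearIndependent ℝ
          (fun i : ((insert α T) ∪ (insert β T) : Finset (Fin r)) => c (i : Fin r)) :=
        hkc _ (by omega)
      have hspan := span_inter (u := c) (S := insert α T) (T := insert β T) hliU
      have hinter : (insert α T) ∩ (insert β T) = T := by
        ext i
        simp only [Finset.mem_inter, Finset.mem_insert]
        constructor
        · rintro ⟨h1 | h1, h2 | h2⟩
          · exact absurd (h1.symm.trans h2) hab
          · exact h2
          · exact h1
          · exact h1
        · intro hiT; exact ⟨Or.inr hiT, Or.inr hiT⟩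
      rw [hinter] at hspan
      ext i
      rw [Finset.mem_inter, hI]
      simp only [Finset.mem_filter, Finset.mem_univ, true_and]
      rw [← hspan]
      rw [Submodule.mem_inf]
    set f : Fin r → Finset (Fin r) := fun α => I (insert α T) \ I T with hf
    have hdisjf : ∀ α ∈ A, ∀ β ∈ A, α ≠ β → Disjoint (f α) (f β) := by
      intro α hα β hβ hab
      rw [Finset.disjoint_left]
      intro i hiα hiβ
      rw [hf, Finset.mem_sdiff] at hiα hiβ
      apply hiα.2
      rw [← hpair α hα β hβ hab, Finset.mem_inter]
      exact ⟨hiα.1, hiβ.1⟩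
    have hcardf : ∀ α ∈ A, (f α).card = m + 1 - i0 := by
      intro α hα
      rw [hf, Finset.card_sdiff_of_subset (hIsub α hα), IH _ (hSα α hα), hi0]
    have hbiU : (A.biUnion f).card = (r - m) * (m + 1 - i0) := by
      rw [Finset.card_biUnion hdisjf]
      rw [Finset.sum_congr rfl hcardf, Finset.sum_const, hAcard, smul_eq_mul]
    have hdisjIT : Disjoint (I T) (A.biUnion f) := by
      rw [Finset.disjoint_left]
      intro i hiT hiB
      rw [Finset.mem_biUnion] at hiB
      obtain ⟨α, hα, hiα⟩ := hiB
      rw [hf, Finset.mem_sdiff] at hiα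
      exact hiα.2 hiT
    have htotal : i0 + (r - m) * (m + 1 - i0) ≤ r := by
      have hcu := Finset.card_le_card (Finset.subset_univ ((I T) ∪ A.biUnion f))
      rw [Finset.card_union_of_disjoint hdisjIT, hbiU, Finset.card_univ, Fintype.card_fin] at hcu
      omega
    -- nonlinear counting contradiction
    have he : m + 1 - i0 = (m - i0) + 1 := by omega
    rw [he, Nat.mul_succ] at htotal
    have hX : 2 * (m - i0) ≤ (r - m) * (m - i0) :=
      Nat.mul_le_mul_right _ (by omega)
    omega
  -- downward induction
  have hP : ∀ k : ℕ, k + 1 ≤ s → ∀ S : Finset (Fin r), S.card = s - k → (I S).card = s - k := by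
    intro k
    induction k with
    | zero =>
      intro _ S hS
      have := hbase S (by omega) (by omega)
      omega
    | succ k ih =>
      intro hk S hS
      have hm := hstep (s - (k + 1)) (by omega) (by omega)
        (fun S' hS' => by
          have := ih (by omega) S' (by omega)
          omega)
      exact hm S hS
  have hsingle : ∀ j : Fin r, (I {j}).card = 1 := by
    intro j
    have := hP (s - 1) (by omega) {j} (by simp; omega)
    simpa using this.trans (by omega)
  -- build the map
  have hchoice : ∀ j : Fin r, ∃ i, I {j} = {i} := by
    intro j
    exact Finset.card_eq_one.mp (hsingle j)
  choose φ hφ using hchoice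
  have hφmem : ∀ j, c' (φ j) ∈ span ℝ (c '' ({j} : Finset (Fin r))) := by
    intro j
    have : φ j ∈ I {j} := by rw [hφ j]; exact Finset.mem_singleton_self _
    rw [hI, Finset.mem_filter] at this
    exact this.2
  have hφinj : Function.Injective φ := by
    intro j₁ j₂ hj
    by_contra hne
    have h1 := hφmem j₁
    have h2 := hφmem j₂
    rw [hj] at h1
    have hU : ({j₁} ∪ {j₂} : Finset (Fin r)).card ≤ kc := by
      have : ({j₁} ∪ {j₂} : Finset (Fin r)).card ≤ 2 := by
        apply le_trans (Finset.card_union_le _ _); simp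
      omega
    have hli := hkc _ hU
    have hspan := span_inter (u := c) (S := {j₁}) (T := {j₂}) hli
    have hinter : ({j₁} ∩ {j₂} : Finset (Fin r)) = ∅ := by
      ext i; simp only [Finset.mem_inter, Finset.mem_singleton, Finset.notMem_empty,
        iff_false, not_and]
      intro h1' h2'; exact hne (h1' ▸ h2' ▸ rfl)
    rw [hinter] at hspan
    have hmem0 : c' (φ j₂) ∈ (⊥ : Submodule ℝ E₃) := by
      have hmm : c' (φ j₂) ∈ span ℝ (c '' (({j₁} : Finset (Fin r)) : Set (Fin r)))
          ⊓ span ℝ (c '' (({j₂} : Finset (Fin r)) : Set (Fin r))) :=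
        Submodule.mem_inf.mpr ⟨h1, h2⟩
      rw [hspan] at hmm
      simpa using hmm
    have := hkc'.nonzero (by omega) (φ j₂)
    exact this (by simpa using hmem0)
  have hφbij : Function.Bijective φ := (Finite.injective_iff_bijective).mp hφinj
  set ψ := Equiv.ofBijective φ hφbij with hψ
  have hkey : ∀ i : Fin r, ∃ g : ℝ, g ≠ 0 ∧ c' i = g • c (ψ.symm i) := by
    intro i
    have hi : i = φ (ψ.symm i) := (ψ.apply_symm_apply i).symm
    have hmem := hφmem (ψ.symm i)
    rw [← hi] at hmem
    have hmem' : c' i ∈ span ℝ ({c (ψ.symm i)} : Set E₃) := by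
      simpa using hmem
    obtain ⟨g, hg⟩ := Submodule.mem_span_singleton.mp hmem'
    refine ⟨g, ?_, hg.symm⟩
    intro hg0
    apply hkc'.nonzero (by omega) i
    rw [← hg, hg0, zero_smul]
  choose γ hγ0 hγ using hkey
  exact ⟨ψ.symm, γ, hγ0, hγ⟩
end Matching
section PermEq
open Finset Submodule Module
variable {r : ℕ} {E₁ E₂ E₃ : Type*} [NormedAddCommGroup E₁] [InnerProductSpace ℝ E₁]
  [NormedAddCommGroup E₂] [InnerProductSpace ℝ E₂] [NormedAddCommGroup E₃]
  [InnerProductSpace ℝ E₃] [FiniteDimensional ℝ E₁] [FiniteDimensional ℝ E₂]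
  [FiniteDimensional ℝ E₃]

open scoped Classical in
lemma perm_eq {a a' : Fin r → E₁} {b b' : Fin r → E₂} {c c' : Fin r → E₃}
    {ka kb kc : ℕ} (hka : KB a ka) (hkb : KB b kb) (hkc : KB c kc)
    (τB τC : Equiv.Perm (Fin r)) (β γ : Fin r → ℝ)
    (hb' : ∀ i, b' i = β i • b (τB i)) (hc' : ∀ i, c' i = γ i • c (τC i))
    (hyp : ∀ (y : E₂) (z : E₃),
      ∑ j : Fin r, ((inner ℝ (c j) z : ℝ) * (inner ℝ (b j) y : ℝ)) • a j
        = ∑ j : Fin r, ((inner ℝ (c' j) z : ℝ) * (inner ℝ (b' j) y : ℝ)) • a' j)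
    (hka2 : 2 ≤ ka) (hkb2 : 2 ≤ kb) (hkc2 : 2 ≤ kc)
    (hka_r : ka ≤ r) (hkb_r : kb ≤ r) (hkc_r : kc ≤ r)
    (hbc : r + 2 ≤ kb + kc) (hab : r + 2 ≤ ka + kb) : τB = τC := by
  by_contra hne
  have hex : ∃ i, τB i ≠ τC i := by
    by_contra h
    push_neg at h
    exact hne (Equiv.ext h)
  obtain ⟨i0, hi⟩ := hex
  set π : Equiv.Perm (Fin r) := τB.symm.trans τC with hπ
  set p : Fin r := τB i0 with hpdef
  have hππ : ∀ i : Fin r, π (τB i) = τC i := by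
    intro i; simp [hπ]
  have hp : π p ≠ p := by
    rw [hpdef, hππ]
    exact fun h => hi h.symm
  set m₀ := max 1 (r + 1 - kb) with hm₀
  have hm₀kc : m₀ + 1 ≤ kc := by omega
  have hm₀ka : m₀ ≤ ka := by omega
  have hm₀r : m₀ + 1 ≤ r := by omega
  have hpair_card : ({p, π p} : Finset (Fin r)).card = 2 := by
    rw [Finset.card_insert_of_notMem (by simpa using Ne.symm hp), Finset.card_singleton]
  obtain ⟨V, hVsub, hVcard⟩ := Finset.exists_subset_card_eq
    (s := Finset.univ \ {p, π p}) (n := m₀ - 1)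
    (by rw [Finset.card_sdiff_of_subset (Finset.subset_univ _), Finset.card_univ, Fintype.card_fin,
      hpair_card]; omega)
  have hpV : p ∉ V := by
    intro h
    have := hVsub h
    rw [Finset.mem_sdiff] at this
    exact this.2 (by simp)
  have hπpV : π p ∉ V := by
    intro h
    have := hVsub h
    rw [Finset.mem_sdiff] at this
    exact this.2 (by simp)
  set U := insert p V with hU
  have hUcard : U.card = m₀ := by
    rw [hU, Finset.card_insert_of_notMem hpV, hVcard]; omega
  have hπpU : π p ∉ U := by
    rw [hU, Finset.mem_insert]
    push_neg
    exact ⟨hp, hπpV⟩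
  set Y := Finset.univ \ U with hY
  set Z := U.image π with hZ
  have hYcard : Y.card = r - m₀ := by
    rw [hY, Finset.card_sdiff_of_subset (Finset.subset_univ _), Finset.card_univ, Fintype.card_fin, hUcard]
  have hZcard : Z.card = m₀ := by
    rw [hZ, Finset.card_image_of_injective _ π.injective, hUcard]
  have hYkb : Y.card + 1 ≤ kb := by omega
  have hZkc : Z.card + 1 ≤ kc := by omega
  have halive : ∃ j₀, j₀ ∈ U \ Z := by
    by_contra h
    push_neg at h
    have hsub : U ⊆ Z := by
      intro u hu
      by_contra hz
      exact h u (Finset.mem_sdiff.mpr ⟨hu, hz⟩)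
    have hUZ : U = Z := Finset.eq_of_subset_of_card_le hsub (by omega)
    have : π p ∈ Z := by
      rw [hZ, Finset.mem_image]
      exact ⟨p, by rw [hU]; exact Finset.mem_insert_self _ _, rfl⟩
    rw [← hUZ] at this
    exact hπpU this
  obtain ⟨j₀, hj₀⟩ := halive
  obtain ⟨y, hyW, hygen⟩ := exists_forall_inner_ne (span ℝ (b '' (Y : Set (Fin r)))) b
  obtain ⟨z, hzW, hzgen⟩ := exists_forall_inner_ne (span ℝ (c '' (Z : Set (Fin r)))) c
  have hEq := hyp y z
  have hbzero : ∀ j ∈ Y, (inner ℝ (b j) y : ℝ) = 0 := fun j hj =>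
    hyW (b j) (Submodule.subset_span ⟨j, hj, rfl⟩)
  have hczero : ∀ j ∈ Z, (inner ℝ (c j) z : ℝ) = 0 := fun j hj =>
    hzW (c j) (Submodule.subset_span ⟨j, hj, rfl⟩)
  have hRHS : ∑ j : Fin r, ((inner ℝ (c' j) z : ℝ) * (inner ℝ (b' j) y : ℝ)) • a' j = 0 := by
    apply Finset.sum_eq_zero
    intro i _
    by_cases hiY : τB i ∈ Y
    · have : (inner ℝ (b' i) y : ℝ) = 0 := by
        rw [hb' i, real_inner_smul_left, hbzero _ hiY, mul_zero]
      rw [this, mul_zero, zero_smul]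
    · have hiU : τB i ∈ U := by
        rw [hY, Finset.mem_sdiff] at hiY
        push_neg at hiY
        exact hiY (Finset.mem_univ _)
      have hiZ : τC i ∈ Z := by
        rw [hZ, Finset.mem_image]
        exact ⟨τB i, hiU, hππ i⟩
      have : (inner ℝ (c' i) z : ℝ) = 0 := by
        rw [hc' i, real_inner_smul_left, hczero _ hiZ, mul_zero]
      rw [this, zero_mul, zero_smul]
  have hLHS : ∑ j : Fin r, ((inner ℝ (c j) z : ℝ) * (inner ℝ (b j) y : ℝ)) • a j
      = ∑ j ∈ U \ Z, ((inner ℝ (c j) z : ℝ) * (inner ℝ (b j) y : ℝ)) • a j := by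
    refine (Finset.sum_subset (Finset.subset_univ (U \ Z)) ?_).symm
    intro j _ hj
    rw [Finset.mem_sdiff] at hj
    push_neg at hj
    by_cases hjU : j ∈ U
    · rw [hczero _ (hj hjU), zero_mul, zero_smul]
    · have : j ∈ Y := by rw [hY, Finset.mem_sdiff]; exact ⟨Finset.mem_univ _, hjU⟩
      rw [hbzero _ this, mul_zero, zero_smul]
  rw [hRHS] at hEq
  rw [hLHS] at hEq
  have hcoef := hka.combo_zero (S := U \ Z)
    (by
      have := Finset.card_le_card (Finset.sdiff_subset (s := U) (t := Z))
      omega)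
    hEq j₀ hj₀
  rw [Finset.mem_sdiff] at hj₀
  have hbj : (inner ℝ (b j₀) y : ℝ) ≠ 0 := by
    apply hygen
    apply hkb.not_mem_span hYkb
    rw [hY, Finset.mem_sdiff]
    push_neg
    intro _
    exact hj₀.1
  have hcj : (inner ℝ (c j₀) z : ℝ) ≠ 0 := by
    apply hzgen
    apply hkc.not_mem_span hZkc
    exact hj₀.2
  exact (mul_ne_zero hcj hbj) hcoef

open scoped Classical in
lemma scalar_one {a a' : Fin r → E₁} {b b' : Fin r → E₂} {c c' : Fin r → E₃}
    {ka kb kc : ℕ} (hka : KB a ka) (hkb : KB b kb) (hkc : KB c kc)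
    (τ : Equiv.Perm (Fin r)) (α β γ : Fin r → ℝ)
    (ha' : ∀ i, a' i = α i • a (τ i))
    (hb' : ∀ i, b' i = β i • b (τ i)) (hc' : ∀ i, c' i = γ i • c (τ i))
    (hyp : ∀ (y : E₂) (z : E₃),
      ∑ j : Fin r, ((inner ℝ (c j) z : ℝ) * (inner ℝ (b j) y : ℝ)) • a j
        = ∑ j : Fin r, ((inner ℝ (c' j) z : ℝ) * (inner ℝ (b' j) y : ℝ)) • a' j)
    (hka1 : 1 ≤ ka) (hkb2 : 2 ≤ kb) (hkc2 : 2 ≤ kc)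
    (hkb_r : kb ≤ r) (hkc_r : kc ≤ r) (hbc : r + 2 ≤ kb + kc) :
    ∀ i, α i * β i * γ i = 1 := by
  intro i₀
  set j₀ := τ i₀ with hj₀def
  obtain ⟨Y, hYsub, hYcard⟩ := Finset.exists_subset_card_eq
    (s := Finset.univ \ {j₀}) (n := min (kb - 1) (r - 1))
    (by rw [Finset.card_sdiff_of_subset (Finset.subset_univ _), Finset.card_univ, Fintype.card_fin, Finset.card_singleton]; omega)
  set Z := (Finset.univ \ {j₀}) \ Y with hZ
  have hZcard : Z.card = r - 1 - min (kb - 1) (r - 1) := by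
    rw [hZ, Finset.card_sdiff_of_subset hYsub, Finset.card_sdiff_of_subset (Finset.subset_univ _),
      Finset.card_univ, Fintype.card_fin, hYcard]
    simp
  have hYkb : Y.card + 1 ≤ kb := by omega
  have hZkc : Z.card + 1 ≤ kc := by omega
  have hj₀Y : j₀ ∉ Y := by
    intro h
    have := hYsub h
    rw [Finset.mem_sdiff] at this
    exact this.2 (by simp)
  have hj₀Z : j₀ ∉ Z := by
    intro h
    rw [hZ, Finset.mem_sdiff, Finset.mem_sdiff] at h
    exact h.1.2 (by simp)
  have hcover : ∀ j : Fin r, j ≠ j₀ → j ∈ Y ∨ j ∈ Z := by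
    intro j hj
    by_cases hjY : j ∈ Y
    · exact Or.inl hjY
    · right
      rw [hZ, Finset.mem_sdiff, Finset.mem_sdiff]
      exact ⟨⟨Finset.mem_univ _, by simpa using hj⟩, hjY⟩
  obtain ⟨y, hyW, hygen⟩ := exists_forall_inner_ne (span ℝ (b '' (Y : Set (Fin r)))) b
  obtain ⟨z, hzW, hzgen⟩ := exists_forall_inner_ne (span ℝ (c '' (Z : Set (Fin r)))) c
  have hbzero : ∀ j ∈ Y, (inner ℝ (b j) y : ℝ) = 0 := fun j hj =>
    hyW (b j) (Submodule.subset_span ⟨j, hj, rfl⟩)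
  have hczero : ∀ j ∈ Z, (inner ℝ (c j) z : ℝ) = 0 := fun j hj =>
    hzW (c j) (Submodule.subset_span ⟨j, hj, rfl⟩)
  have hEq := hyp y z
  have hLHS : ∑ j : Fin r, ((inner ℝ (c j) z : ℝ) * (inner ℝ (b j) y : ℝ)) • a j
      = ((inner ℝ (c j₀) z : ℝ) * (inner ℝ (b j₀) y : ℝ)) • a j₀ := by
    rw [Finset.sum_eq_single j₀]
    · intro j _ hj
      rcases hcover j hj with h | h
      · rw [hbzero _ h, mul_zero, zero_smul]
      · rw [hczero _ h, zero_mul, zero_smul]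
    · intro h; exact absurd (Finset.mem_univ _) h
  have hRHS : ∑ j : Fin r, ((inner ℝ (c' j) z : ℝ) * (inner ℝ (b' j) y : ℝ)) • a' j
      = ((α i₀ * β i₀ * γ i₀) * ((inner ℝ (c j₀) z : ℝ) * (inner ℝ (b j₀) y : ℝ))) • a j₀ := by
    rw [Finset.sum_eq_single i₀]
    · rw [ha' i₀, hb' i₀, hc' i₀, ← hj₀def, real_inner_smul_left, real_inner_smul_left,
        smul_smul]
      ring_nf
    · intro i _ hi
      have hτ : τ i ≠ j₀ := fun h => hi (τ.injective (h.trans hj₀def.symm▸rfl))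
      rcases hcover (τ i) hτ with h | h
      · rw [hb' i, real_inner_smul_left, hbzero _ h, mul_zero, mul_zero, zero_smul]
      · rw [hc' i, real_inner_smul_left, hczero _ h, mul_zero, zero_mul, zero_smul]
    · intro h; exact absurd (Finset.mem_univ _) h
  rw [hLHS, hRHS] at hEq
  have hbj : (inner ℝ (b j₀) y : ℝ) ≠ 0 := hygen j₀ (hkb.not_mem_span hYkb hj₀Y)
  have hcj : (inner ℝ (c j₀) z : ℝ) ≠ 0 := hzgen j₀ (hkc.not_mem_span hZkc hj₀Z)
  have haj : a j₀ ≠ 0 := hka.nonzero hka1 j₀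
  have hfac : ((inner ℝ (c j₀) z : ℝ) * (inner ℝ (b j₀) y : ℝ))
      - (α i₀ * β i₀ * γ i₀) * ((inner ℝ (c j₀) z : ℝ) * (inner ℝ (b j₀) y : ℝ)) = 0 := by
    by_contra h
    apply haj
    have := sub_eq_zero.mpr hEq
    rw [← sub_smul] at this
    exact (smul_eq_zero.mp this).resolve_left h
  have hX : (inner ℝ (c j₀) z : ℝ) * (inner ℝ (b j₀) y : ℝ) ≠ 0 := mul_ne_zero hcj hbj
  have hfac2 : (1 - α i₀ * β i₀ * γ i₀) * ((inner ℝ (c j₀) z : ℝ) * (inner ℝ (b j₀) y : ℝ)) = 0 := by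
    linear_combination hfac
  rcases mul_eq_zero.mp hfac2 with h | h
  · linarith
  · exact absurd h hX
end PermEq
section Bridge
open Finset Submodule Module

/-- Rows of a matrix as vectors in Euclidean space. -/
noncomputable def toE {r κ : ℕ} (N : Matrix (Fin r) (Fin κ) ℝ) : Fin r → EuclideanSpace ℝ (Fin κ) :=
  fun j => (WithLp.equiv 2 (Fin κ → ℝ)).symm (N j)

lemma toE_KB {r κ : ℕ} (N : Matrix (Fin r) (Fin κ) ℝ) {k : ℕ}
    (h : ∀ s : Finset (Fin r), s.card ≤ k →
      LinearIndependent ℝ (fun i : s => N (i : Fin r))) :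
    KB (toE N) k := by
  intro S hS
  have hli := h S hS
  exact hli.map' (WithLp.linearEquiv 2 ℝ (Fin κ → ℝ)).symm.toLinearMap
    (LinearEquiv.ker _)

lemma kruskalRank_mem {r κ : ℕ} (N : Matrix (Fin r) (Fin κ) ℝ) :
    kruskalRank N ≤ r ∧ ∀ s : Finset (Fin r), s.card = kruskalRank N →
      LinearIndependent ℝ (fun i : s => N (i : Fin r)) := by
  have h0 : (0:ℕ) ∈ {j | j ≤ r ∧ ∀ s : Finset (Fin r), s.card = j →
      LinearIndependent ℝ (fun i : s => N (i : Fin r))} := by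
    refine ⟨Nat.zero_le _, ?_⟩
    intro s hs
    have hse : s = ∅ := Finset.card_eq_zero.mp hs
    subst hse
    exact linearIndependent_empty_type
  have hbdd : BddAbove {j | j ≤ r ∧ ∀ s : Finset (Fin r), s.card = j →
      LinearIndependent ℝ (fun i : s => N (i : Fin r))} := ⟨r, fun j hj => hj.1⟩
  have hmem := Nat.sSup_mem ⟨0, h0⟩ hbdd
  exact hmem

lemma kruskalRank_li {r κ : ℕ} (N : Matrix (Fin r) (Fin κ) ℝ) (s : Finset (Fin r))
    (hs : s.card ≤ kruskalRank N) :
    LinearIndependent ℝ (fun i : s => N (i : Fin r)) := by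
  obtain ⟨hle, hli⟩ := kruskalRank_mem N
  obtain ⟨t, hst, htcard⟩ := Finset.exists_superset_card_eq hs
    (by rw [Fintype.card_fin]; exact hle)
  exact (hli t htcard).comp (fun i : s => ⟨(i : Fin r), hst i.2⟩)
    (fun i j hij => Subtype.ext (by simpa using congrArg Subtype.val hij))

lemma toE_KB_kruskal {r κ : ℕ} (N : Matrix (Fin r) (Fin κ) ℝ) :
    KB (toE N) (kruskalRank N) :=
  toE_KB N (fun s hs => kruskalRank_li N s hs)

lemma bridge {r κ₁ κ₂ κ₃ : ℕ} {M₁ M₁' : Matrix (Fin r) (Fin κ₁) ℝ}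
    {M₂ M₂' : Matrix (Fin r) (Fin κ₂) ℝ} {M₃ M₃' : Matrix (Fin r) (Fin κ₃) ℝ}
    (h : tripleProd M₁ M₂ M₃ = tripleProd M₁' M₂' M₃') :
    ∀ (y : EuclideanSpace ℝ (Fin κ₂)) (z : EuclideanSpace ℝ (Fin κ₃)),
      ∑ j : Fin r, ((inner ℝ (toE M₃ j) z : ℝ) * (inner ℝ (toE M₂ j) y : ℝ)) • toE M₁ j
        = ∑ j : Fin r, ((inner ℝ (toE M₃' j) z : ℝ) * (inner ℝ (toE M₂' j) y : ℝ)) • toE M₁' j := by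
  intro y z
  have key : ∀ (P₁ : Matrix (Fin r) (Fin κ₁) ℝ) (P₂ : Matrix (Fin r) (Fin κ₂) ℝ)
      (P₃ : Matrix (Fin r) (Fin κ₃) ℝ) (k : Fin κ₁),
      (WithLp.equiv 2 (Fin κ₁ → ℝ))
        (∑ j : Fin r, ((inner ℝ (toE P₃ j) z : ℝ) * (inner ℝ (toE P₂ j) y : ℝ)) • toE P₁ j) k
        = ∑ k₂ : Fin κ₂, ∑ k₃ : Fin κ₃, tripleProd P₁ P₂ P₃ k k₂ k₃ * (y k₂ * z k₃) := by
    intro P₁ P₂ P₃ k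
    have h1 : (WithLp.equiv 2 (Fin κ₁ → ℝ))
        (∑ j : Fin r, ((inner ℝ (toE P₃ j) z : ℝ) * (inner ℝ (toE P₂ j) y : ℝ)) • toE P₁ j)
        = ∑ j : Fin r, (WithLp.equiv 2 (Fin κ₁ → ℝ))
          (((inner ℝ (toE P₃ j) z : ℝ) * (inner ℝ (toE P₂ j) y : ℝ)) • toE P₁ j) :=
      map_sum (WithLp.linearEquiv 2 ℝ (Fin κ₁ → ℝ))
      (fun j => ((inner ℝ (toE P₃ j) z : ℝ) * (inner ℝ (toE P₂ j) y : ℝ)) • toE P₁ j) univ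
    rw [h1, Finset.sum_apply]
    have h2 : ∀ j : Fin r,
        ((WithLp.equiv 2 (Fin κ₁ → ℝ))
          (((inner ℝ (toE P₃ j) z : ℝ) * (inner ℝ (toE P₂ j) y : ℝ)) • toE P₁ j)) k
        = (∑ k₃, P₃ j k₃ * z k₃) * (∑ k₂, P₂ j k₂ * y k₂) * P₁ j k := by
      intro j
      simp [toE, PiLp.inner_apply, RCLike.inner_apply, mul_comm]
    rw [Finset.sum_congr rfl (fun j _ => h2 j)]
    have hterm : ∀ j : Fin r, (∑ k₃, P₃ j k₃ * z k₃) * (∑ k₂, P₂ j k₂ * y k₂) * P₁ j k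
        = ∑ k₂, ∑ k₃, P₁ j k * P₂ j k₂ * P₃ j k₃ * (y k₂ * z k₃) := by
      intro j
      rw [Finset.sum_mul_sum, Finset.sum_mul]
      rw [Finset.sum_comm]
      refine Finset.sum_congr rfl (fun k₂ _ => ?_)
      rw [Finset.sum_mul]
      refine Finset.sum_congr rfl (fun k₃ _ => ?_)
      ring
    rw [Finset.sum_congr rfl (fun j _ => hterm j), Finset.sum_comm]
    refine Finset.sum_congr rfl (fun k₂ _ => ?_)
    rw [Finset.sum_comm]
    refine Finset.sum_congr rfl (fun k₃ _ => ?_)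
    show _ = tripleProd P₁ P₂ P₃ k k₂ k₃ * (y k₂ * z k₃)
    rw [tripleProd, Finset.sum_mul]
  apply (WithLp.equiv 2 (Fin κ₁ → ℝ)).injective
  funext k
  rw [key M₁ M₂ M₃ k, key M₁' M₂' M₃' k, h]

lemma permMatrix_mul {n κ : ℕ} (σ : Equiv.Perm (Fin n)) (D : Fin n → ℝ)
    (N : Matrix (Fin n) (Fin κ) ℝ) :
    permMatrix σ * Matrix.diagonal D * N = Matrix.of (fun i k => D (σ i) * N (σ i) k) := by
  ext i k
  rw [Matrix.mul_apply]
  have hPD : ∀ l, (permMatrix σ * Matrix.diagonal D) i l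
      = if σ i = l then D (σ i) else 0 := by
    intro l
    rw [Matrix.mul_apply]
    rw [Finset.sum_eq_single (σ i)]
    · simp [permMatrix, Matrix.diagonal_apply]
    · intro m _ hm
      simp only [permMatrix, Matrix.of_apply]
      rw [if_neg (Ne.symm hm), zero_mul]
    · intro h; exact absurd (Finset.mem_univ _) h
  have hterm : ∀ l, (permMatrix σ * Matrix.diagonal D) i l * N l k
      = if σ i = l then D (σ i) * N l k else 0 := by
    intro l
    rw [hPD l, ite_mul, zero_mul]
  rw [Finset.sum_congr rfl (fun l _ => hterm l), Finset.sum_ite_eq]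
  simp
end Bridge

/-- Kruskal's theorem. -/
theorem kruskal_theorem {r κ₁ κ₂ κ₃ : ℕ} (hr : 0 < r) (hκ₁ : 0 < κ₁) (hκ₂ : 0 < κ₂)
    (hκ₃ : 0 < κ₃)
    (N₁ N₁' : Matrix (Fin r) (Fin κ₁) ℝ) (N₂ N₂' : Matrix (Fin r) (Fin κ₂) ℝ)
    (N₃ N₃' : Matrix (Fin r) (Fin κ₃) ℝ)
    (hrank : kruskalRank N₁ + kruskalRank N₂ + kruskalRank N₃ ≥ 2 * r + 2)
    (heq : tripleProd N₁ N₂ N₃ = tripleProd N₁' N₂' N₃') :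
    ∃ (σ : Equiv.Perm (Fin r)) (D₁ D₂ D₃ : Fin r → ℝ),
      Matrix.diagonal D₁ * Matrix.diagonal D₂ * Matrix.diagonal D₃ = 1 ∧
      N₁' = permMatrix σ * Matrix.diagonal D₁ * N₁ ∧
      N₂' = permMatrix σ * Matrix.diagonal D₂ * N₂ ∧
      N₃' = permMatrix σ * Matrix.diagonal D₃ * N₃ := by
  classical
  obtain ⟨hka_r, -⟩ := kruskalRank_mem N₁
  obtain ⟨hkb_r, -⟩ := kruskalRank_mem N₂
  obtain ⟨hkc_r, -⟩ := kruskalRank_mem N₃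
  have hka2 : 2 ≤ kruskalRank N₁ := by omega
  have hkb2 : 2 ≤ kruskalRank N₂ := by omega
  have hkc2 : 2 ≤ kruskalRank N₃ := by omega
  have hKa : KB (toE N₁) (kruskalRank N₁) := toE_KB_kruskal N₁
  have hKb : KB (toE N₂) (kruskalRank N₂) := toE_KB_kruskal N₂
  have hKc : KB (toE N₃) (kruskalRank N₃) := toE_KB_kruskal N₃
  -- permuted tripleProd identities
  have heq213 : tripleProd N₂ N₁ N₃ = tripleProd N₂' N₁' N₃' := by
    funext k₂ k₁ k₃
    have h := congrFun (congrFun (congrFun heq k₁) k₂) k₃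
    simp only [tripleProd] at h ⊢
    calc ∑ j, N₂ j k₂ * N₁ j k₁ * N₃ j k₃
        = ∑ j, N₁ j k₁ * N₂ j k₂ * N₃ j k₃ := Finset.sum_congr rfl (fun j _ => by ring)
      _ = ∑ j, N₁' j k₁ * N₂' j k₂ * N₃' j k₃ := h
      _ = ∑ j, N₂' j k₂ * N₁' j k₁ * N₃' j k₃ := Finset.sum_congr rfl (fun j _ => by ring)
  have heq132 : tripleProd N₁ N₃ N₂ = tripleProd N₁' N₃' N₂' := by
    funext k₁ k₃ k₂
    have h := congrFun (congrFun (congrFun heq k₁) k₂) k₃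
    simp only [tripleProd] at h ⊢
    calc ∑ j, N₁ j k₁ * N₃ j k₃ * N₂ j k₂
        = ∑ j, N₁ j k₁ * N₂ j k₂ * N₃ j k₃ := Finset.sum_congr rfl (fun j _ => by ring)
      _ = ∑ j, N₁' j k₁ * N₂' j k₂ * N₃' j k₃ := h
      _ = ∑ j, N₁' j k₁ * N₃' j k₃ * N₂' j k₂ := Finset.sum_congr rfl (fun j _ => by ring)
  have heq231 : tripleProd N₂ N₃ N₁ = tripleProd N₂' N₃' N₁' := by
    funext k₂ k₃ k₁
    have h := congrFun (congrFun (congrFun heq k₁) k₂) k₃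
    simp only [tripleProd] at h ⊢
    calc ∑ j, N₂ j k₂ * N₃ j k₃ * N₁ j k₁
        = ∑ j, N₁ j k₁ * N₂ j k₂ * N₃ j k₃ := Finset.sum_congr rfl (fun j _ => by ring)
      _ = ∑ j, N₁' j k₁ * N₂' j k₂ * N₃' j k₃ := h
      _ = ∑ j, N₂' j k₂ * N₃' j k₃ * N₁' j k₁ := Finset.sum_congr rfl (fun j _ => by ring)
  -- hypotheses for the 3 counting modes
  have HypA := bridge heq
  have HypA2 := bridge heq132
  have HypB := bridge heq213
  have HypB2 := bridge heq231
  -- R1 inequalities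
  have R1c := omega_ineq hKa hKb HypA
  have R1b := omega_ineq hKa hKc HypA2
  have R1a := omega_ineq hKb hKc HypB2
  -- primed Kruskal bounds
  have hKc' : KB (toE N₃') (kruskalRank N₃) :=
    kb_primed (s := 2*r+1 - (kruskalRank N₁ + kruskalRank N₂)) hKc R1c (by omega) hka_r hkb_r (by omega) hkc_r
  have hKb' : KB (toE N₂') (kruskalRank N₂) :=
    kb_primed (s := 2*r+1 - (kruskalRank N₁ + kruskalRank N₃)) hKb R1b (by omega) hka_r hkc_r (by omega) hkb_r
  have hKa' : KB (toE N₁') (kruskalRank N₁) :=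
    kb_primed (s := 2*r+1 - (kruskalRank N₂ + kruskalRank N₃)) hKa R1a (by omega) hkb_r hkc_r (by omega) hka_r
  -- R2 inequalities (swapped roles)
  have R2c := omega_ineq hKa' hKb' (fun y z => (HypA y z).symm)
  have R2b := omega_ineq hKa' hKc' (fun y z => (HypA2 y z).symm)
  have R2a := omega_ineq hKb' hKc' (fun y z => (HypB2 y z).symm)
  -- matchings
  obtain ⟨τC, γ, hγ0, hγ⟩ := matching (s := 2*r+1 - (kruskalRank N₁ + kruskalRank N₂)) hKc hKc' R2c (by omega) hka_r hkb_r (by omega) hkc_r hkc2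
  obtain ⟨τB, β, hβ0, hβ⟩ := matching (s := 2*r+1 - (kruskalRank N₁ + kruskalRank N₃)) hKb hKb' R2b (by omega) hka_r hkc_r (by omega) hkb_r hkb2
  obtain ⟨τA, α, hα0, hα⟩ := matching (s := 2*r+1 - (kruskalRank N₂ + kruskalRank N₃)) hKa hKa' R2a (by omega) hkb_r hkc_r (by omega) hka_r hka2
  -- permutations agree
  have hBC : τB = τC :=
    perm_eq hKa hKb hKc τB τC β γ hβ hγ HypA hka2 hkb2 hkc2 hka_r hkb_r hkc_r
      (by omega) (by omega)
  have hAC : τA = τC :=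
    perm_eq hKb hKa hKc τA τC α γ hα hγ HypB hkb2 hka2 hkc2 hkb_r hka_r hkc_r
      (by omega) (by omega)
  rw [hBC] at hβ
  rw [hAC] at hα
  -- scalars multiply to one
  have hμ : ∀ i, α i * β i * γ i = 1 :=
    scalar_one hKa hKb hKc τC α β γ hα hβ hγ HypA (by omega) hkb2 hkc2 hkb_r hkc_r (by omega)
  -- assemble
  refine ⟨τC, fun j => α (τC.symm j), fun j => β (τC.symm j), fun j => γ (τC.symm j),
    ?_, ?_, ?_, ?_⟩
  · rw [Matrix.diagonal_mul_diagonal, Matrix.diagonal_mul_diagonal]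
    have : (fun j => α (τC.symm j) * β (τC.symm j) * γ (τC.symm j)) = fun _ => (1:ℝ) := by
      funext j; exact hμ (τC.symm j)
    rw [show (fun i => α (τC.symm i) * β (τC.symm i) * γ (τC.symm i)) = fun _ => (1:ℝ) from this]
    exact Matrix.diagonal_one
  · rw [permMatrix_mul]
    ext i k
    have h1 := congrFun (congrArg (WithLp.equiv 2 (Fin κ₁ → ℝ)) (hα i)) k
    simp [toE] at h1
    simpa [Equiv.symm_apply_apply] using h1
  · rw [permMatrix_mul]
    ext i k
    have h1 := congrFun (congrArg (WithLp.equiv 2 (Fin κ₂ → ℝ)) (hβ i)) k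
    simp [toE] at h1
    simpa [Equiv.symm_apply_apply] using h1
  · rw [permMatrix_mul]
    ext i k
    have h1 := congrFun (congrArg (WithLp.equiv 2 (Fin κ₃ → ℝ)) (hγ i)) k
    simp [toE] at h1
    simpa [Equiv.symm_apply_apply] using h1
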